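/- arXiv:1706.09770 — 7 statements merged into one kernel-verified Lean document; each statement's English description precedes it below -/
import Mathlib

section
/- Let Λ be a numerical semigroup of genus g with elements λ₀ = 0 < λ₁ < ⋯. Let g(i) be the number of gaps smaller than λᵢ and G(i) the number of pairs of gaps adding up to λᵢ. Then ν_i = i - g(i) + G(i) + 1, where ν_i = #D(i) = #{λⱼ ≤ λᵢ : λᵢ - λⱼ ∈ Λ}. -/
theorem nu_eq
    (Λ : Set ℕ) (h0 : 0 ∈ Λ) (hadd : ∀ a ∈ Λ, ∀ b ∈ Λ, a + b ∈ Λ)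
    (hfin : {n : ℕ | n ∉ Λ}.Finite)
    (lam : ℕ → ℕ) (hmono : StrictMono lam) (hrange : Set.range lam = Λ)
    (i : ℕ) (gi Gi nu : ℕ)
    (hgi : gi = Nat.card {h : ℕ | h ∉ Λ ∧ h < lam i})
    (hGi : Gi = Nat.card {p : ℕ × ℕ | p.1 ∉ Λ ∧ p.2 ∉ Λ ∧ p.1 + p.2 = lam i})
    (hnu : nu = Nat.card {x : ℕ | x ∈ Λ ∧ x ≤ lam i ∧ lam i - x ∈ Λ}) :
    (nu : ℤ) = (i : ℤ) - gi + Gi + 1 := by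
  classical
  set n := lam i with hn
  have hnΛ : n ∈ Λ := hrange ▸ Set.mem_range_self i
  set S := Finset.range (n + 1) with hS
  set A := S.filter (fun x => x ∈ Λ ∧ (n - x) ∈ Λ) with hA
  set B := S.filter (fun x => x ∈ Λ ∧ (n - x) ∉ Λ) with hB
  set C := S.filter (fun x => x ∉ Λ ∧ (n - x) ∈ Λ) with hC
  set D := S.filter (fun x => x ∉ Λ ∧ (n - x) ∉ Λ) with hD
  set L := S.filter (fun x => x ∈ Λ) with hL
  set H := S.filter (fun x => x ∉ Λ) with hH
  -- L.card = i + 1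
  have hLcard : L.card = i + 1 := by
    have himg : L = (Finset.range (i + 1)).image lam := by
      ext x
      simp only [hL, hS, Finset.mem_filter, Finset.mem_range, Finset.mem_image,
        Nat.lt_succ_iff]
      constructor
      · rintro ⟨hxn, hxΛ⟩
        obtain ⟨j, hj⟩ := (hrange ▸ hxΛ : x ∈ Set.range lam)
        exact ⟨j, hmono.le_iff_le.mp (hj ▸ hxn), hj⟩
      · rintro ⟨j, hj, rfl⟩
        exact ⟨hmono.monotone hj, hrange ▸ Set.mem_range_self j⟩
    rw [himg, Finset.card_image_of_injective _ hmono.injective, Finset.card_range]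
  -- nu = A.card
  have hnuA : nu = A.card := by
    rw [hnu]
    have : {x : ℕ | x ∈ Λ ∧ x ≤ n ∧ n - x ∈ Λ} = ↑A := by
      ext x
      simp only [hA, hS, Finset.coe_filter, Finset.mem_range, Set.mem_setOf_eq,
        Nat.lt_succ_iff]
      tauto
    rw [this, Nat.card_coe_set_eq, Set.ncard_coe_finset]
  -- gi = H.card
  have hgiH : gi = H.card := by
    rw [hgi]
    have : {h : ℕ | h ∉ Λ ∧ h < n} = ↑H := by
      ext x
      simp only [hH, hS, Finset.coe_filter, Finset.mem_range, Set.mem_setOf_eq,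
        Nat.lt_succ_iff]
      constructor
      · rintro ⟨hx, hlt⟩; exact ⟨le_of_lt hlt, hx⟩
      · rintro ⟨hle, hx⟩
        refine ⟨hx, lt_of_le_of_ne hle ?_⟩
        rintro rfl; exact hx hnΛ
    rw [this, Nat.card_coe_set_eq, Set.ncard_coe_finset]
  -- Gi = D.card
  have hGiD : Gi = D.card := by
    rw [hGi]
    have : {p : ℕ × ℕ | p.1 ∉ Λ ∧ p.2 ∉ Λ ∧ p.1 + p.2 = n}
        = ↑(D.image (fun x => (x, n - x))) := by
      ext ⟨a, b⟩
      simp only [hD, hS, Finset.coe_image, Set.mem_image, Finset.coe_filter,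
        Finset.mem_range, Set.mem_setOf_eq, Nat.lt_succ_iff, Prod.mk.injEq]
      constructor
      · rintro ⟨ha, hb, hab⟩
        have hb' : b = n - a := by omega
        subst hb'
        exact ⟨a, ⟨by omega, ha, hb⟩, rfl, rfl⟩
      · rintro ⟨x, ⟨hxn, hx, hnx⟩, rfl, rfl⟩
        exact ⟨hx, hnx, by omega⟩
    rw [this, Nat.card_coe_set_eq, Set.ncard_coe_finset,
      Finset.card_image_of_injective]
    intro x y hxy
    exact (Prod.mk.injEq _ _ _ _ ▸ hxy).1
  -- B.card = C.card
  have hBC : B.card = C.card := by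
    apply Finset.card_bij' (fun x _ => n - x) (fun x _ => n - x)
    · intro a ha
      simp only [hB, hS, Finset.mem_filter, Finset.mem_range, Nat.lt_succ_iff] at ha
      simp only [hC, hS, Finset.mem_filter, Finset.mem_range, Nat.lt_succ_iff]
      rw [Nat.sub_sub_self ha.1]
      exact ⟨by omega, ha.2.2, ha.2.1⟩
    · intro a ha
      simp only [hC, hS, Finset.mem_filter, Finset.mem_range, Nat.lt_succ_iff] at ha
      simp only [hB, hS, Finset.mem_filter, Finset.mem_range, Nat.lt_succ_iff]
      rw [Nat.sub_sub_self ha.1]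
      exact ⟨by omega, ha.2.2, ha.2.1⟩
    · intro a ha
      simp only [hB, hS, Finset.mem_filter, Finset.mem_range, Nat.lt_succ_iff] at ha
      exact Nat.sub_sub_self ha.1
    · intro a ha
      simp only [hC, hS, Finset.mem_filter, Finset.mem_range, Nat.lt_succ_iff] at ha
      exact Nat.sub_sub_self ha.1
  -- A + B = L, C + D = H
  have hAB : A.card + B.card = L.card := by
    rw [hA, hB, hL]
    have := Finset.card_filter_add_card_filter_not
      (s := S.filter (fun x => x ∈ Λ)) (p := fun x => (n - x) ∈ Λ)
    simp only [Finset.filter_filter] at this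
    convert this using 3 <;> { ext x; tauto }
  have hCD : C.card + D.card = H.card := by
    rw [hC, hD, hH]
    have := Finset.card_filter_add_card_filter_not
      (s := S.filter (fun x => x ∉ Λ)) (p := fun x => (n - x) ∈ Λ)
    simp only [Finset.filter_filter] at this
    convert this using 3 <;> { ext x; tauto }
  omega
end

section
/- Let Λ be a numerical semigroup of genus g and I an ideal of Λ with difference d > 0. The largest integer not in I equals d + 2g - 1 if and only if Λ \ I = {λ ∈ Λ : d + 2g - 1 - λ ∈ Λ}. -/
theorem ideal_attains_bound_iff_complement
    (Λ I : Set ℕ) (h0 : 0 ∈ Λ) (hadd : ∀ a ∈ Λ, ∀ b ∈ Λ, a + b ∈ Λ)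
    (hfinΛ : {n : ℕ | n ∉ Λ}.Finite)
    (hIsub : I ⊆ Λ) (hIdeal : ∀ x ∈ I, ∀ y ∈ Λ, x + y ∈ I)
    (hfinI : (Λ \ I).Finite)
    (g d : ℕ) (hg : g = Nat.card {n : ℕ | n ∉ Λ})
    (hd : d = Nat.card ↥(Λ \ I)) (hdpos : 0 < d) :
    IsGreatest {n : ℕ | n ∉ I} (d + 2 * g - 1) ↔
      Λ \ I = {x : ℕ | x ∈ Λ ∧ x ≤ d + 2 * g - 1 ∧ d + 2 * g - 1 - x ∈ Λ} := by
  classical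
  set F := d + 2 * g - 1 with hF
  have hgG : g = hfinΛ.toFinset.card := by
    rw [hg, Nat.card_coe_set_eq, Set.ncard_eq_toFinset_card _ hfinΛ]
  -- every gap of Λ is < 2g
  have gap_lt : ∀ n, n ∉ Λ → n < 2 * g := by
    intro n hn
    have hA : ∀ b ∈ (Finset.range (n+1)).filter (· ∈ Λ), n - b ∈ hfinΛ.toFinset := by
      intro b hb
      simp only [Finset.mem_filter, Finset.mem_range] at hb
      simp only [Set.Finite.mem_toFinset, Set.mem_setOf_eq]
      intro hmem
      have h2 := hadd b hb.2 (n - b) hmem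
      have hbn : b + (n - b) = n := by omega
      rw [hbn] at h2
      exact hn h2
    have hinj : Set.InjOn (fun b => n - b) ((Finset.range (n+1)).filter (· ∈ Λ)) := by
      intro a ha b hb hab
      simp only [Finset.coe_filter, Finset.mem_range, Set.mem_setOf_eq] at ha hb
      simp only at hab
      omega
    have hAcard := Finset.card_le_card_of_injOn _ hA hinj
    have hB : (Finset.range (n+1)).filter (fun b => ¬ b ∈ Λ) ⊆ hfinΛ.toFinset := by
      intro b hb
      simp only [Finset.mem_filter] at hb
      simpa using hb.2
    have hBcard := Finset.card_le_card hB
    have hsplit := Finset.card_filter_add_card_filter_not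
      (s := Finset.range (n+1)) (p := (· ∈ Λ))
    rw [Finset.card_range] at hsplit
    rw [← hgG] at hAcard hBcard
    omega
  -- complement of I
  have hSset : {n : ℕ | n ∉ I} = {n : ℕ | n ∉ Λ} ∪ (Λ \ I) := by
    ext n
    simp only [Set.mem_setOf_eq, Set.mem_union, Set.mem_diff]
    constructor
    · intro hn
      by_cases h : n ∈ Λ
      · exact Or.inr ⟨h, hn⟩
      · exact Or.inl h
    · rintro (h | ⟨_, h⟩)
      · exact fun hc => h (hIsub hc)
      · exact h
  have hfinS : {n : ℕ | n ∉ I}.Finite := by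
    rw [hSset]; exact hfinΛ.union hfinI
  have hcardS : hfinS.toFinset.card = g + d := by
    have hdisj : Disjoint {n : ℕ | n ∉ Λ} (Λ \ I) := by
      rw [Set.disjoint_left]
      intro n hn hn2
      exact hn hn2.1
    have h1 : ({n : ℕ | n ∉ I}).ncard = g + d := by
      rw [hSset, Set.ncard_union_eq hdisj hfinΛ hfinI, hg, hd,
        Nat.card_coe_set_eq, Nat.card_coe_set_eq]
    rwa [Set.ncard_eq_toFinset_card _ hfinS] at h1
  -- every non-element of I is < d + 2g
  have notI_lt : ∀ x, x ∉ I → x < d + 2 * g := by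
    intro x hx
    have hA : ∀ b ∈ (Finset.range (x+1)).filter (· ∈ Λ), x - b ∈ hfinS.toFinset := by
      intro b hb
      simp only [Finset.mem_filter, Finset.mem_range] at hb
      simp only [Set.Finite.mem_toFinset, Set.mem_setOf_eq]
      intro hmem
      have h2 := hIdeal (x - b) hmem b hb.2
      have hbn : x - b + b = x := by omega
      rw [hbn] at h2
      exact hx h2
    have hinj : Set.InjOn (fun b => x - b) ((Finset.range (x+1)).filter (· ∈ Λ)) := by
      intro a ha b hb hab
      simp only [Finset.coe_filter, Finset.mem_range, Set.mem_setOf_eq] at ha hb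
      simp only at hab
      omega
    have hAcard := Finset.card_le_card_of_injOn _ hA hinj
    have hB : (Finset.range (x+1)).filter (fun b => ¬ b ∈ Λ) ⊆ hfinΛ.toFinset := by
      intro b hb
      simp only [Finset.mem_filter] at hb
      simpa using hb.2
    have hBcard := Finset.card_le_card hB
    have hsplit := Finset.card_filter_add_card_filter_not
      (s := Finset.range (x+1)) (p := (· ∈ Λ))
    rw [Finset.card_range] at hsplit
    rw [hcardS] at hAcard
    rw [← hgG] at hBcard
    omega
  have hFΛ : F ∈ Λ := by
    by_contra h
    have := gap_lt F h
    omega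
  constructor
  · rintro ⟨hFnotI, -⟩
    ext x
    simp only [Set.mem_diff, Set.mem_setOf_eq]
    constructor
    · rintro ⟨hxΛ, hxI⟩
      have hxF : x ≤ F := by have := notI_lt x hxI; omega
      refine ⟨hxΛ, hxF, ?_⟩
      have hBG : (Finset.range (F+1)).filter (fun b => ¬ b ∈ Λ) = hfinΛ.toFinset := by
        apply Finset.Subset.antisymm
        · intro b hb; simp only [Finset.mem_filter] at hb; simpa using hb.2
        · intro b hb
          simp only [Set.Finite.mem_toFinset, Set.mem_setOf_eq] at hb
          simp only [Finset.mem_filter, Finset.mem_range]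
          exact ⟨by have := gap_lt b hb; omega, hb⟩
      have hAcard : ((Finset.range (F+1)).filter (fun b => b ∈ Λ)).card = g + d := by
        have hsplit := Finset.card_filter_add_card_filter_not
          (s := Finset.range (F+1)) (p := (· ∈ Λ))
        rw [Finset.card_range, hBG, ← hgG] at hsplit
        omega
      have hTS : ((Finset.range (F+1)).filter (fun b => b ∈ Λ)).image (fun b => F - b)
          ⊆ hfinS.toFinset := by
        intro y hy
        simp only [Finset.mem_image] at hy
        obtain ⟨b, hb, rfl⟩ := hy
        simp only [Finset.mem_filter, Finset.mem_range] at hb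
        simp only [Set.Finite.mem_toFinset, Set.mem_setOf_eq]
        intro hmem
        have h2 := hIdeal (F - b) hmem b hb.2
        have hbn : F - b + b = F := by omega
        rw [hbn] at h2
        exact hFnotI h2
      have hTcard : (((Finset.range (F+1)).filter (fun b => b ∈ Λ)).image
          (fun b => F - b)).card = g + d := by
        rw [Finset.card_image_of_injOn, hAcard]
        intro a ha b hb hab
        simp only [Finset.coe_filter, Finset.mem_range, Set.mem_setOf_eq] at ha hb
        simp only at hab
        omega
      have hTeq : ((Finset.range (F+1)).filter (fun b => b ∈ Λ)).image (fun b => F - b)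
          = hfinS.toFinset :=
        Finset.eq_of_subset_of_card_le hTS (by rw [hTcard, hcardS])
      have hxS : x ∈ hfinS.toFinset := by
        simp only [Set.Finite.mem_toFinset, Set.mem_setOf_eq]; exact hxI
      rw [← hTeq] at hxS
      simp only [Finset.mem_image] at hxS
      obtain ⟨b, hb, hbx⟩ := hxS
      simp only [Finset.mem_filter, Finset.mem_range] at hb
      have hbeq : F - x = b := by omega
      rw [hbeq]
      exact hb.2
    · rintro ⟨hxΛ, hxF, hFx⟩
      refine ⟨hxΛ, fun hxI => ?_⟩
      have h2 := hIdeal x hxI (F - x) hFx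
      have hxn : x + (F - x) = F := by omega
      rw [hxn] at h2
      exact hFnotI h2
  · intro hEq
    have hFS : F ∈ Λ \ I := by
      rw [hEq]
      exact ⟨hFΛ, le_refl F, by simpa using h0⟩
    refine ⟨hFS.2, ?_⟩
    intro n hn
    have := notI_lt n hn
    omega
end

section
/- Let Λ be a symmetric numerical semigroup of genus g and let I be an ideal of Λ with difference d > 0. Then the largest integer not in I equals d + 2g - 1 if and only if I is a principal ideal a + Λ for some a ∈ Λ, a > 0. -/
theorem symmetric_ideal_attains_bound_iff_principal
    (Λ I : Set ℕ) (h0 : 0 ∈ Λ) (hadd : ∀ a ∈ Λ, ∀ b ∈ Λ, a + b ∈ Λ)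
    (hfinΛ : {n : ℕ | n ∉ Λ}.Finite)
    (hIsub : I ⊆ Λ) (hIdeal : ∀ x ∈ I, ∀ y ∈ Λ, x + y ∈ I)
    (hfinI : (Λ \ I).Finite)
    (g d : ℕ) (hg : g = Nat.card {n : ℕ | n ∉ Λ}) (hgpos : 0 < g)
    (hsym : IsGreatest {n : ℕ | n ∉ Λ} (2 * g - 1))
    (hd : d = Nat.card ↥(Λ \ I)) (hdpos : 0 < d) :
    IsGreatest {n : ℕ | n ∉ I} (d + 2 * g - 1) ↔
      ∃ a ∈ Λ, 0 < a ∧ I = {x : ℕ | ∃ l ∈ Λ, x = a + l} := by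
  classical
  have hFnot : 2 * g - 1 ∉ Λ := hsym.1
  have hFub : ∀ x, x ∉ Λ → x ≤ 2 * g - 1 := fun x hx => hsym.2 hx
  have hbig : ∀ y, 2 * g - 1 < y → y ∈ Λ := by
    intro y hy; by_contra hc; exact absurd (hFub y hc) (by omega)
  have hGcard : hfinΛ.toFinset.card = g := by
    rw [hg, Nat.card_coe_set_eq, Set.ncard_eq_toFinset_card _ hfinΛ]
  have hdcard : hfinI.toFinset.card = d := by
    rw [hd, Nat.card_coe_set_eq, Set.ncard_eq_toFinset_card _ hfinI]
  -- symmetry of Λ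
  have hfwd : ∀ x, x ≤ 2*g-1 → x ∈ Λ → 2*g-1-x ∉ Λ := by
    intro x hx hxΛ hc
    have := hadd x hxΛ _ hc
    rw [show x + (2*g-1-x) = 2*g-1 by omega] at this
    exact hFnot this
  have hsymm : ∀ x, x ≤ 2*g-1 → (x ∈ Λ ↔ 2*g-1 - x ∉ Λ) := by
    have hScard : ((Finset.range (2*g)).filter (· ∈ Λ)).card = g := by
      have h1 := Finset.card_filter_add_card_filter_not
        (s := Finset.range (2*g)) (p := (· ∈ Λ))
      have h2 : (Finset.range (2*g)).filter (fun x => ¬ x ∈ Λ) = hfinΛ.toFinset := by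
        ext x
        simp only [Finset.mem_filter, Finset.mem_range, Set.Finite.mem_toFinset,
          Set.mem_setOf_eq]
        constructor
        · tauto
        · intro hx; exact ⟨by have := hFub x hx; omega, hx⟩
      rw [h2, hGcard, Finset.card_range] at h1
      omega
    have himg : ((Finset.range (2*g)).filter (· ∈ Λ)).image (fun x => 2*g-1-x)
        = hfinΛ.toFinset := by
      apply Finset.eq_of_subset_of_card_le
      · intro y hy
        simp only [Finset.mem_image, Finset.mem_filter, Finset.mem_range] at hy
        obtain ⟨x, ⟨hx1, hx2⟩, rfl⟩ := hy
        simp only [Set.Finite.mem_toFinset, Set.mem_setOf_eq]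
        exact hfwd x (by omega) hx2
      · rw [Finset.card_image_of_injOn, hScard, hGcard]
        intro a ha b hb hab
        simp only [Finset.coe_filter, Finset.mem_range, Set.mem_setOf_eq] at ha hb
        simp only at hab
        omega
    intro x hx
    constructor
    · exact hfwd x hx
    · intro hc
      have hmemG : 2*g-1-x ∈ hfinΛ.toFinset := by
        simp only [Set.Finite.mem_toFinset, Set.mem_setOf_eq]; exact hc
      rw [← himg] at hmemG
      simp only [Finset.mem_image, Finset.mem_filter, Finset.mem_range] at hmemG
      obtain ⟨l, ⟨hl1, hl2⟩, hleq⟩ := hmemG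
      have : x = l := by omega
      rw [this]; exact hl2
  -- complement of I
  have hIcfin : {x : ℕ | x ∉ I}.Finite := by
    apply Set.Finite.subset (hfinΛ.union hfinI)
    intro x hx
    by_cases hxΛ : x ∈ Λ
    · exact Or.inr ⟨hxΛ, hx⟩
    · exact Or.inl hxΛ
  have hIcFin_eq : hIcfin.toFinset = hfinΛ.toFinset ∪ hfinI.toFinset := by
    ext x
    simp only [Set.Finite.mem_toFinset, Set.mem_setOf_eq, Finset.mem_union, Set.mem_diff]
    constructor
    · intro hx
      by_cases hxΛ : x ∈ Λ
      · exact Or.inr ⟨hxΛ, hx⟩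
      · exact Or.inl hxΛ
    · rintro (hx | ⟨_, hx⟩)
      · exact fun hxI => hx (hIsub hxI)
      · exact hx
  have hIccard : hIcfin.toFinset.card = g + d := by
    rw [hIcFin_eq, Finset.card_union_of_disjoint, hGcard, hdcard]
    rw [Finset.disjoint_left]
    intro x hx hx2
    simp only [Set.Finite.mem_toFinset, Set.mem_setOf_eq, Set.mem_diff] at hx hx2
    exact hx hx2.1
  constructor
  · -- forward: attains bound → principal
    intro h
    set n := d + 2*g - 1 with hn
    have hnI : n ∉ I := h.1
    have hub : ∀ x, x ∉ I → x ≤ n := fun x hx => h.2 hx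
    have hTcard : ((Finset.range (n+1)).filter (· ∈ Λ)).card = d + g := by
      have h1 := Finset.card_filter_add_card_filter_not
        (s := Finset.range (n+1)) (p := (· ∈ Λ))
      have h2 : (Finset.range (n+1)).filter (fun x => ¬ x ∈ Λ) = hfinΛ.toFinset := by
        ext x
        simp only [Finset.mem_filter, Finset.mem_range, Set.Finite.mem_toFinset,
          Set.mem_setOf_eq]
        constructor
        · tauto
        · intro hx; exact ⟨by have := hFub x hx; omega, hx⟩
      rw [h2, hGcard, Finset.card_range] at h1
      omega
    have himg2 : ((Finset.range (n+1)).filter (· ∈ Λ)).image (fun l => n - l)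
        = hIcfin.toFinset := by
      apply Finset.eq_of_subset_of_card_le
      · intro y hy
        simp only [Finset.mem_image, Finset.mem_filter, Finset.mem_range] at hy
        obtain ⟨l, ⟨hl1, hl2⟩, rfl⟩ := hy
        simp only [Set.Finite.mem_toFinset, Set.mem_setOf_eq]
        intro hc
        have := hIdeal _ hc _ hl2
        rw [show n - l + l = n by omega] at this
        exact hnI this
      · rw [Finset.card_image_of_injOn, hTcard, hIccard]
        · omega
        · intro a ha b hb hab
          simp only [Finset.coe_filter, Finset.mem_range, Set.mem_setOf_eq] at ha hb
          simp only at hab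
          omega
    have hchar : ∀ x, x ∉ I ↔ (x ≤ n ∧ n - x ∈ Λ) := by
      intro x
      constructor
      · intro hx
        have hxn := hub x hx
        have hmem : x ∈ hIcfin.toFinset := by
          simp only [Set.Finite.mem_toFinset, Set.mem_setOf_eq]; exact hx
        rw [← himg2] at hmem
        simp only [Finset.mem_image, Finset.mem_filter, Finset.mem_range] at hmem
        obtain ⟨l, ⟨hl1, hl2⟩, hleq⟩ := hmem
        refine ⟨hxn, ?_⟩
        rw [show n - x = l by omega]
        exact hl2
      · rintro ⟨hxn, hnx⟩ hxI
        have := hIdeal _ hxI _ hnx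
        rw [show x + (n - x) = n by omega] at this
        exact hnI this
    have hdI : d ∈ I := by
      by_contra hdI
      have := (hchar d).mp hdI
      rw [show n - d = 2*g-1 by omega] at this
      exact hFnot this.2
    refine ⟨d, hIsub hdI, hdpos, ?_⟩
    ext x
    simp only [Set.mem_setOf_eq]
    constructor
    · intro hxI
      have hxd : d ≤ x := by
        by_contra hxd
        push_neg at hxd
        exact ((hchar x).mpr ⟨by omega, hbig _ (by omega)⟩) hxI
      refine ⟨x - d, ?_, by omega⟩
      by_cases hxn : x ≤ n
      · have hnx : n - x ∉ Λ := fun hc => ((hchar x).mpr ⟨hxn, hc⟩) hxI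
        have hs := (hsymm (x - d) (by omega))
        rw [show 2*g-1 - (x-d) = n - x by omega] at hs
        exact hs.mpr hnx
      · exact hbig _ (by omega)
    · rintro ⟨l, hl, rfl⟩
      by_contra hc
      obtain ⟨hxn, hnx⟩ := (hchar _).mp hc
      have hlF : l ≤ 2*g-1 := by omega
      have hs := (hsymm l hlF).mp hl
      rw [show 2*g-1-l = n - (d+l) by omega] at hs
      exact hs hnx
  · -- backward: principal → attains bound
    rintro ⟨a, haΛ, hapos, hIeq⟩
    have hmem : ∀ x : ℕ, x ∈ I ↔ ∃ l ∈ Λ, x = a + l := by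
      intro x; rw [hIeq]; simp only [Set.mem_setOf_eq]
    have hIcFin_eq2 : hIcfin.toFinset
        = Finset.range a ∪ hfinΛ.toFinset.image (a + ·) := by
      ext x
      simp only [Set.Finite.mem_toFinset, Set.mem_setOf_eq, Finset.mem_union,
        Finset.mem_range, Finset.mem_image]
      rw [hmem]
      constructor
      · intro hx
        by_cases hxa : x < a
        · exact Or.inl hxa
        · right
          refine ⟨x - a, ?_, by omega⟩
          intro hc
          exact hx ⟨x - a, hc, by omega⟩
      · rintro (hxa | ⟨u, hu, rfl⟩) ⟨l, hl, hxl⟩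
        · omega
        · have : u = l := by omega
          exact hu (this ▸ hl)
    have hda : d = a := by
      have hcard2 : (Finset.range a ∪ hfinΛ.toFinset.image (a + ·)).card = a + g := by
        rw [Finset.card_union_of_disjoint, Finset.card_range,
          Finset.card_image_of_injective _ (fun x y hxy => by omega), hGcard]
        rw [Finset.disjoint_left]
        intro x hx hx2
        simp only [Finset.mem_range] at hx
        simp only [Finset.mem_image] at hx2
        obtain ⟨u, _, hux⟩ := hx2
        omega
      rw [hIcFin_eq2, hcard2] at hIccard
      omega
    subst hda
    constructor
    · simp only [Set.mem_setOf_eq]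
      rw [hmem]
      rintro ⟨l, hl, hle⟩
      have : l = 2*g-1 := by omega
      exact hFnot (this ▸ hl)
    · intro x hx
      simp only [Set.mem_setOf_eq] at hx
      by_contra hc
      push_neg at hc
      exact hx ((hmem x).mpr ⟨x - d, hbig _ (by omega), by omega⟩)
end

section
/- Let Λ be the numerical semigroup generated by the interval {a, a+1, …, a+x-1} with a ≥ 2 and 2 ≤ x. Then the number n_ℓ of maximal intervals of consecutive gaps of Λ of length at least ℓ equals ⌊(a-1-ℓ)/(x-1)⌋ + 1 if 1 ≤ ℓ ≤ a - 1, and 0 if ℓ ≥ a. -/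
/-- Number of maximal intervals of consecutive gaps of `Λ` of length at least `ℓ`,
counted via their starting points. -/
noncomputable def nGapIntervals (Λ : Set ℕ) (ℓ : ℕ) : ℕ :=
  Nat.card {s : ℕ | (∀ k < ℓ, s + k ∉ Λ) ∧ (s = 0 ∨ s - 1 ∈ Λ)}

lemma mem_closure_Icc {a x : ℕ} (hx : 1 ≤ x) (n : ℕ) :
    n ∈ (AddSubmonoid.closure (Set.Icc a (a + x - 1)) : AddSubmonoid ℕ) ↔
      ∃ m, m * a ≤ n ∧ n ≤ m * (a + x - 1) := by
  constructor
  · intro hn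
    induction hn using AddSubmonoid.closure_induction with
    | mem g hg => exact ⟨1, by simpa using hg.1, by simpa using hg.2⟩
    | zero => exact ⟨0, by simp, by simp⟩
    | add p q _ _ hp hq =>
      obtain ⟨m1, h1, h2⟩ := hp
      obtain ⟨m2, h3, h4⟩ := hq
      exact ⟨m1 + m2, by rw [Nat.add_mul]; omega, by rw [Nat.add_mul]; omega⟩
  · rintro ⟨m, h1, h2⟩
    induction m generalizing n with
    | zero =>
      simp only [Nat.zero_mul, Nat.le_zero] at h2
      subst h2; exact zero_mem _
    | succ m ih =>
      have hma : m * a ≤ m * (a + x - 1) := Nat.mul_le_mul_left _ (by omega)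
      have e1 : (m + 1) * a = m * a + a := by ring
      have e2 : (m + 1) * (a + x - 1) = m * (a + x - 1) + (a + x - 1) := by ring
      set g := min (a + x - 1) (n - m * a) with hg
      have hga : a ≤ g := by
        apply le_min (by omega)
        omega
      have hgn : g ≤ n - m * a := min_le_right _ _
      have hgle : g ≤ a + x - 1 := min_le_left _ _
      have hsub1 : m * a ≤ n - g := by omega
      have hsub2 : n - g ≤ m * (a + x - 1) := by
        rcases min_cases (a + x - 1) (n - m * a) with ⟨h, _⟩ | ⟨h, h'⟩ <;> omega
      have := AddSubmonoid.add_mem _ (ih _ hsub1 hsub2)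
        (AddSubmonoid.subset_closure (Set.mem_Icc.mpr ⟨hga, hgle⟩))
      have hn : n - g + g = n := by omega
      rwa [hn] at this

theorem interval_generated_gap_intervals (a x : ℕ) (ha : 2 ≤ a) (hx : 2 ≤ x) (ℓ : ℕ)
    (Λ : Set ℕ)
    (hΛ : Λ = (AddSubmonoid.closure (Set.Icc a (a + x - 1)) : AddSubmonoid ℕ)) :
    (1 ≤ ℓ → ℓ ≤ a - 1 → nGapIntervals Λ ℓ = (a - 1 - ℓ) / (x - 1) + 1) ∧
      (a ≤ ℓ → nGapIntervals Λ ℓ = 0) := by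
  have hmem : ∀ n, n ∈ Λ ↔ ∃ m, m * a ≤ n ∧ n ≤ m * (a + x - 1) := by
    intro n; rw [hΛ]; exact mem_closure_Icc (by omega) n
  constructor
  · intro h1 h2
    set N := (a - 1 - ℓ) / (x - 1) + 1 with hN
    have hset : {s : ℕ | (∀ k < ℓ, s + k ∉ Λ) ∧ (s = 0 ∨ s - 1 ∈ Λ)} =
        ↑((Finset.range N).image (fun m => m * (a + x - 1) + 1)) := by
      ext s
      simp only [Finset.coe_image, Finset.mem_coe, Finset.mem_image, Finset.mem_range,
        Set.mem_setOf_eq, Finset.mem_image, Set.mem_image]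
      constructor
      · rintro ⟨hgap, hs⟩
        have hsnot : s ∉ Λ := by simpa using hgap 0 h1
        have hs0 : s ≠ 0 := by
          rintro rfl
          exact hsnot ((hmem 0).mpr ⟨0, by simp, by simp⟩)
        have hprev : s - 1 ∈ Λ := hs.resolve_left hs0
        obtain ⟨m, hm1, hm2⟩ := (hmem (s - 1)).mp hprev
        have hseq : s = m * (a + x - 1) + 1 := by
          by_contra hne
          exact hsnot ((hmem s).mpr ⟨m, by omega, by omega⟩)
        refine ⟨m, ?_, hseq.symm⟩
        -- show m < N, i.e. m * (x-1) ≤ a - 1 - ℓ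
        have hlast : s + (ℓ - 1) ∉ Λ := hgap (ℓ - 1) (by omega)
        have hmx : m * (x - 1) ≤ a - 1 - ℓ := by
          by_contra hcon
          push_neg at hcon
          have key : m * (a + x - 1) = m * a + m * (x - 1) := by
            have h : a + x - 1 = a + (x - 1) := by omega
            rw [h, Nat.mul_add]
          have e1 : (m + 1) * a = m * a + a := by ring
          have e2 : (m + 1) * (a + x - 1) = m * (a + x - 1) + (a + x - 1) := by ring
          exact hlast ((hmem _).mpr ⟨m + 1, by omega, by omega⟩)
        rw [hN, Nat.lt_succ_iff, Nat.le_div_iff_mul_le (by omega : 0 < x - 1)]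
        exact hmx
      · rintro ⟨m, hmN, rfl⟩
        have hmx : m * (x - 1) ≤ a - 1 - ℓ := by
          rw [hN, Nat.lt_succ_iff, Nat.le_div_iff_mul_le (by omega : 0 < x - 1)] at hmN
          exact hmN
        have key : m * (a + x - 1) = m * a + m * (x - 1) := by
          have : a + x - 1 = a + (x - 1) := by omega
          rw [this, Nat.mul_add]
        constructor
        · intro k hk hmem'
          obtain ⟨m', h1', h2'⟩ := (hmem _).mp hmem'
          rcases le_or_gt m' m with hle | hlt
          · have : m' * (a + x - 1) ≤ m * (a + x - 1) := Nat.mul_le_mul_right _ hle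
            omega
          · have : (m + 1) * a ≤ m' * a := Nat.mul_le_mul_right _ hlt
            have e : (m + 1) * a = m * a + a := by ring
            omega
        · right
          simp only [Nat.add_sub_cancel]
          exact (hmem _).mpr ⟨m, Nat.mul_le_mul_left _ (by omega), le_refl _⟩
    have hinj : Function.Injective (fun m : ℕ => m * (a + x - 1) + 1) := by
      intro p q hpq
      simp only [add_left_inj] at hpq
      exact Nat.eq_of_mul_eq_mul_right (by omega) hpq
    rw [nGapIntervals, hset, Nat.card_coe_set_eq, Set.ncard_coe_finset,
      Finset.card_image_of_injective _ hinj, Finset.card_range]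
  · intro hℓ
    have : {s : ℕ | (∀ k < ℓ, s + k ∉ Λ) ∧ (s = 0 ∨ s - 1 ∈ Λ)} = ∅ := by
      ext s
      simp only [Set.mem_setOf_eq, Set.mem_empty_iff_false, iff_false, not_and]
      intro hgap hs
      have hsnot : s ∉ Λ := by simpa using hgap 0 (by omega)
      have hs0 : s ≠ 0 := by
        rintro rfl
        exact hsnot ((hmem 0).mpr ⟨0, by simp, by simp⟩)
      have hprev : s - 1 ∈ Λ := hs.resolve_left hs0
      obtain ⟨m, hm1, hm2⟩ := (hmem (s - 1)).mp hprev
      have : s + (a - 1) ∈ Λ := by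
        refine (hmem _).mpr ⟨m + 1, ?_, ?_⟩
        · have : (m + 1) * a = m * a + a := by ring
          omega
        · have : (m + 1) * (a + x - 1) = m * (a + x - 1) + (a + x - 1) := by ring
          omega
      exact hgap (a - 1) (by omega) this
    rw [nGapIntervals, this]
    simp
end

section
/- The numerical semigroup generated by the interval {a, a+1, …, a+x-1} equals {0} ∪ ⋃_{k≥1} {ka, ka+1, …, ka + k(x-1)}. -/
theorem interval_generated_semigroup_description (a x : ℕ) (ha : 2 ≤ a) (hx : 2 ≤ x) :
    ((AddSubmonoid.closure (Set.Icc a (a + x - 1)) : AddSubmonoid ℕ) : Set ℕ) =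
      {0} ∪ ⋃ k ∈ {k : ℕ | 1 ≤ k}, Set.Icc (k * a) (k * a + k * (x - 1)) := by
  ext n
  simp only [Set.mem_union, Set.mem_singleton_iff, Set.mem_iUnion, Set.mem_setOf_eq,
    Set.mem_Icc, SetLike.mem_coe]
  constructor
  · intro hn
    induction hn using AddSubmonoid.closure_induction with
    | mem y hy =>
      right
      exact ⟨1, le_refl 1, by simp only [Set.mem_Icc] at hy; omega⟩
    | zero => left; rfl
    | add y z _ _ hy hz =>
      rcases hy with hy0 | ⟨k, hk, hk1, hk2⟩
      · rcases hz with hz0 | ⟨l, hl, hl1, hl2⟩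
        · left; omega
        · right; exact ⟨l, hl, by omega, by omega⟩
      · rcases hz with hz0 | ⟨l, hl, hl1, hl2⟩
        · right; exact ⟨k, hk, by omega, by omega⟩
        · right
          refine ⟨k + l, by omega, ?_, ?_⟩ <;> nlinarith
  · rintro (rfl | ⟨k, hk, h1, h2⟩)
    · exact AddSubmonoid.zero_mem _
    · induction k generalizing n with
      | zero => omega
      | succ k ih =>
        rcases Nat.eq_zero_or_pos k with rfl | hkpos
        · apply AddSubmonoid.subset_closure
          simp only [Set.mem_Icc]
          omega
        · set r := n - (k + 1) * a with hr
          set s := min r (x - 1) with hs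
          have hma : (k + 1) * a = k * a + a := by ring
          have hmx : (k + 1) * (x - 1) = k * (x - 1) + (x - 1) := by ring
          have hs1 : s ≤ r := min_le_left _ _
          have hs2 : s ≤ x - 1 := min_le_right _ _
          have hs3 : s = r ∨ s = x - 1 := by
            rcases le_total r (x - 1) with h | h
            · left; simp [hs, min_eq_left h]
            · right; simp [hs, min_eq_right h]
          have hrs : r - s ≤ k * (x - 1) := by omega
          have hn : n = (a + s) + (k * a + (r - s)) := by omega
          rw [hn]
          apply AddSubmonoid.add_mem
          · apply AddSubmonoid.subset_closure
            simp only [Set.mem_Icc]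
            omega
          · have h2' : r - s ≤ k * (x - 1) := hrs
            have h1' : k * a ≤ k * a + (r - s) := Nat.le_add_right _ _
            exact ih _ hkpos h1' (Nat.add_le_add_left hrs _)
end

section
/- Define recursively Λ₁ = ℕ₀ and Λ_m = q·Λ_{m-1} ∪ {i ∈ ℕ₀ : i ≥ q^m − q^{⌊(m+1)/2⌋}} for m ≥ 2, where q ≥ 2 is a prime power. Then the number n_ℓ of maximal intervals of consecutive gaps of Λ_m of length at least ℓ satisfies n_ℓ = q^{⌊(m+1−log_q(ℓ+1))/2⌋} − 1, for 1 ≤ ℓ with ⌊m+1−log_q(ℓ+1)⌋ ≥ 1. -/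
/-- The Weierstrass semigroups of the Garcia–Stichtenoth tower:
`Λ₁ = ℕ₀`, `Λ_m = q·Λ_{m-1} ∪ {i : i ≥ q^m − q^⌊(m+1)/2⌋}`. -/
def GS (q : ℕ) : ℕ → Set ℕ
  | 0 => Set.univ
  | 1 => Set.univ
  | (m + 2) => (fun n => q * n) '' GS q (m + 1) ∪
      {i : ℕ | q ^ (m + 2) - q ^ ((m + 3) / 2) ≤ i}

/-- Threshold: above `GST q m v`, every multiple of `q^v` belongs to `GS q m`. -/
def GST (q m v : ℕ) : ℕ := q ^ m - q ^ ((m + v + 1) / 2)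

/-- Number of gap intervals in the region `[GST q m v, GST q m (v-1))`. -/
def GSA (q m v : ℕ) : ℕ := q ^ ((m - v + 1) / 2) - q ^ ((m - v) / 2)

lemma GST_antitone {q : ℕ} (hq : 2 ≤ q) {m v w : ℕ} (h : v ≤ w) : GST q m w ≤ GST q m v :=
  Nat.sub_le_sub_left (Nat.pow_le_pow_right (by omega) (by omega)) _

lemma GST_eq_zero {q : ℕ} (hq : 2 ≤ q) {m v : ℕ} (h : m ≤ v + 1) : GST q m v = 0 := by
  have : q ^ m ≤ q ^ ((m + v + 1) / 2) := Nat.pow_le_pow_right (by omega) (by omega)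
  simp [GST, Nat.sub_eq_zero_of_le this]

lemma GST_dvd (q : ℕ) {m v : ℕ} (h : v ≤ m) : q ^ v ∣ GST q m v :=
  Nat.dvd_sub (pow_dvd_pow q h) (pow_dvd_pow q (by omega))

lemma GST_interval {q : ℕ} (hq : 2 ≤ q) {m v : ℕ} (h1 : 1 ≤ v) (h2 : v ≤ m) :
    GST q m (v - 1) = GST q m v + GSA q m v * q ^ v := by
  have e1 : (m + (v - 1) + 1) / 2 = (m + v) / 2 := by omega
  have e2 : (m - v + 1) / 2 + v = (m + v + 1) / 2 := by omega
  have e3 : (m - v) / 2 + v = (m + v) / 2 := by omega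
  unfold GST GSA
  rw [e1, Nat.sub_mul, ← pow_add, ← pow_add, e2, e3]
  have h4 : q ^ ((m + v) / 2) ≤ q ^ ((m + v + 1) / 2) := Nat.pow_le_pow_right (by omega) (by omega)
  have h5 : q ^ ((m + v + 1) / 2) ≤ q ^ m := Nat.pow_le_pow_right (by omega) (by omega)
  omega

lemma GSA_sum {q : ℕ} (hq : 2 ≤ q) {m : ℕ} : ∀ d t, t + d = m →
    ∑ v ∈ Finset.Ico t m, GSA q m v = q ^ ((d + 1) / 2) - 1 := by
  intro d
  induction d with
  | zero => intro t ht; subst ht; simp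
  | succ d ihd =>
    intro t ht
    have h1 : t < m := by omega
    rw [Finset.sum_eq_sum_Ico_succ_bot h1, ihd (t + 1) (by omega)]
    have e1 : m - t = d + 1 := by omega
    unfold GSA
    rw [e1]
    have h4 : q ^ ((d + 1) / 2) ≤ q ^ ((d + 1 + 1) / 2) := Nat.pow_le_pow_right (by omega) (by omega)
    have h5 : 1 ≤ q ^ ((d + 1) / 2) := Nat.one_le_pow _ _ (by omega)
    omega

lemma gs_mem (q : ℕ) (hq : 2 ≤ q) :
    ∀ m, 1 ≤ m → ∀ n, (n ∈ GS q m ↔ ∃ v, q ^ v ∣ n ∧ GST q m v ≤ n) := by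
  intro m hm
  induction m, hm using Nat.le_induction with
  | base =>
    intro n
    simp only [GS, Set.mem_univ, true_iff]
    exact ⟨0, one_dvd _, by simp [GST]⟩
  | succ m hm ih =>
    obtain ⟨k, rfl⟩ : ∃ k, m = k + 1 := ⟨m - 1, by omega⟩
    intro n
    show n ∈ GS q (k + 2) ↔ _
    simp only [GS, Set.mem_union, Set.mem_image, Set.mem_setOf_eq]
    constructor
    · rintro (⟨n', hn', rfl⟩ | hn)
      · obtain ⟨v, hv, hT⟩ := (ih n').mp hn'
        refine ⟨v + 1, ?_, ?_⟩
        · rw [pow_succ']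
          exact mul_dvd_mul_left q hv
        · unfold GST at *
          have he : (k + 2 + (v + 1) + 1) / 2 = (k + 1 + v + 1) / 2 + 1 := by omega
          rw [he]
          calc q ^ (k + 2) - q ^ ((k + 1 + v + 1) / 2 + 1)
              = q * (q ^ (k + 1) - q ^ ((k + 1 + v + 1) / 2)) := by
                rw [Nat.mul_sub, ← pow_succ', ← pow_succ']
            _ ≤ q * n' := Nat.mul_le_mul_left q hT
      · exact ⟨0, one_dvd _, by simpa [GST, show k + 2 + 0 + 1 = k + 3 by ring] using hn⟩
    · rintro ⟨v, hv, hT⟩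
      rcases Nat.eq_zero_or_pos v with rfl | hvpos
      · right
        simpa [GST, show k + 2 + 0 + 1 = k + 3 by ring] using hT
      · left
        obtain ⟨v', rfl⟩ : ∃ v', v = v' + 1 := ⟨v - 1, by omega⟩
        have hqdvd : q ∣ n := dvd_trans (dvd_pow_self q (by omega)) hv
        obtain ⟨n', rfl⟩ := hqdvd
        refine ⟨n', (ih n').mpr ⟨v', ?_, ?_⟩, rfl⟩
        · have : q ^ (v' + 1) ∣ q * n' := hv
          rw [pow_succ'] at this
          exact (mul_dvd_mul_iff_left (by omega : q ≠ 0)).mp this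
        · unfold GST at *
          have he : (k + 2 + (v' + 1) + 1) / 2 = (k + 1 + v' + 1) / 2 + 1 := by omega
          rw [he] at hT
          have : q * (q ^ (k + 1) - q ^ ((k + 1 + v' + 1) / 2)) ≤ q * n' := by
            rw [Nat.mul_sub, ← pow_succ', ← pow_succ']
            exact hT
          exact Nat.le_of_mul_le_mul_left this (by omega)

lemma gs_region {q : ℕ} (hq : 2 ≤ q) {m : ℕ} (hm : 1 ≤ m) {b : ℕ} (hb : b ∈ GS q m) :
    ∃ v, q ^ v ∣ b ∧ GST q m v ≤ b ∧ (v = 0 ∨ b < GST q m (v - 1)) := by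
  classical
  have hex : ∃ v, GST q m v ≤ b := ⟨m, by rw [GST_eq_zero hq (by omega)]; omega⟩
  refine ⟨Nat.find hex, ?_, Nat.find_spec hex, ?_⟩
  · obtain ⟨w, hw, hTw⟩ := (gs_mem q hq m hm b).mp hb
    exact dvd_trans (pow_dvd_pow q (Nat.find_min' hex hTw)) hw
  · rcases Nat.eq_zero_or_pos (Nat.find hex) with h0 | hpos
    · exact Or.inl h0
    · right
      have := Nat.find_min hex (show Nat.find hex - 1 < Nat.find hex by omega)
      omega

theorem garcia_stichtenoth_gap_intervals (q : ℕ) (hq : 2 ≤ q) (hpp : IsPrimePow q)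
    (m ℓ : ℕ) (hm : 1 ≤ m) (hℓ : 1 ≤ ℓ)
    (hcond : 1 ≤ m + 1 - Nat.clog q (ℓ + 1)) (hlog : Nat.clog q (ℓ + 1) ≤ m) :
    nGapIntervals (GS q m) ℓ = q ^ ((m + 1 - Nat.clog q (ℓ + 1)) / 2) - 1 := by
  classical
  set t := Nat.clog q (ℓ + 1) with ht
  have hq1 : 1 < q := hq
  have ht1 : 1 ≤ t := Nat.clog_pos hq1 (by omega)
  have hlpow : ℓ + 1 ≤ q ^ t := Nat.le_pow_clog hq1 _
  have hlow : q ^ (t - 1) < ℓ + 1 := (Nat.lt_clog_iff_pow_lt hq1).mp (by omega)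
  set F : Finset ℕ := (Finset.Ico t m).biUnion
    (fun v => (Finset.range (GSA q m v)).image fun j => GST q m v + j * q ^ v) with hF
  -- block bounds
  have hblock : ∀ v, t ≤ v → v < m → ∀ j < GSA q m v,
      GST q m v + j * q ^ v < GST q m (v - 1) := by
    intro v hv1 hv2 j hj
    rw [GST_interval hq (by omega) (by omega)]
    have h2 : (j + 1) * q ^ v ≤ GSA q m v * q ^ v := Nat.mul_le_mul_right _ (by omega)
    rw [add_mul, one_mul] at h2
    have h1 : 1 ≤ q ^ v := Nat.one_le_pow _ _ (by omega)
    omega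
  -- the set of starting points is the image of F under (· + 1)
  have hSeq : {s : ℕ | (∀ k < ℓ, s + k ∉ GS q m) ∧ (s = 0 ∨ s - 1 ∈ GS q m)}
      = ↑(F.image (· + 1)) := by
    ext s
    simp only [Set.mem_setOf_eq, Finset.coe_image, Set.mem_image, Finset.mem_coe, hF,
      Finset.mem_biUnion, Finset.mem_Ico, Finset.mem_image, Finset.mem_range]
    constructor
    · rintro ⟨hgap, hpred⟩
      have h0GS : (0 : ℕ) ∈ GS q m :=
        (gs_mem q hq m hm 0).mpr ⟨m, dvd_zero _, by rw [GST_eq_zero hq (by omega)]⟩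
      have hs0 : s ≠ 0 := by
        intro h
        exact hgap 0 (by omega) (by simpa [h] using h0GS)
      have hsb : s = (s - 1) + 1 := by omega
      set b := s - 1 with hb
      have hbGS : b ∈ GS q m := hpred.resolve_left hs0
      have hbN : b < GST q m (t - 1) := by
        by_contra hN
        push_neg at hN
        obtain ⟨v, hdvd, hTv, hreg⟩ := gs_region hq hm hbGS
        rcases hreg with rfl | hlt
        · refine hgap 0 (by omega) ?_
          refine (gs_mem q hq m hm _).mpr ⟨0, one_dvd _, by omega⟩
        · have hvt : v < t := by
            by_contra hvt
            push_neg at hvt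
            have : GST q m (v - 1) ≤ GST q m (t - 1) := GST_antitone hq (by omega)
            omega
          have h1 : 1 ≤ q ^ v := Nat.one_le_pow _ _ (by omega)
          have hkℓ : q ^ v - 1 < ℓ := by
            have : q ^ v ≤ q ^ (t - 1) := Nat.pow_le_pow_right (by omega) (by omega)
            omega
          refine hgap (q ^ v - 1) hkℓ ?_
          have hsk : s + (q ^ v - 1) = b + q ^ v := by omega
          rw [hsk]
          exact (gs_mem q hq m hm _).mpr ⟨v, dvd_add hdvd dvd_rfl, by omega⟩
      obtain ⟨v, hdvd, hTv, hreg⟩ := gs_region hq hm hbGS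
      have hv0 : v ≠ 0 := by
        rintro rfl
        have : GST q m (t - 1) ≤ GST q m 0 := GST_antitone hq (by omega)
        omega
      have hlt := hreg.resolve_left hv0
      have hvt : t ≤ v := by
        by_contra hvt
        push_neg at hvt
        have : GST q m (t - 1) ≤ GST q m v := GST_antitone hq (by omega)
        omega
      have hvm : v < m := by
        by_contra hvm
        push_neg at hvm
        have : GST q m (v - 1) = 0 := GST_eq_zero hq (by omega)
        omega
      obtain ⟨j, hj⟩ := Nat.dvd_sub hdvd (GST_dvd q (by omega : v ≤ m))
      have hbj : b = GST q m v + j * q ^ v := by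
        have h1 : q ^ v * j = j * q ^ v := Nat.mul_comm _ _
        omega
      have hjA : j < GSA q m v := by
        by_contra hjA
        push_neg at hjA
        have h2 : GSA q m v * q ^ v ≤ j * q ^ v := Nat.mul_le_mul_right _ hjA
        have h3 := GST_interval hq (show 1 ≤ v by omega) (show v ≤ m by omega)
        omega
      exact ⟨b, ⟨v, ⟨hvt, hvm⟩, j, hjA, hbj.symm⟩, by omega⟩
    · rintro ⟨b, ⟨v, ⟨hvt, hvm⟩, j, hjA, rfl⟩, rfl⟩
      have h1 : 1 ≤ q ^ v := Nat.one_le_pow _ _ (by omega)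
      have hqtv : q ^ t ≤ q ^ v := Nat.pow_le_pow_right (by omega) hvt
      have hdvdb : q ^ v ∣ GST q m v + j * q ^ v :=
        dvd_add (GST_dvd q (by omega)) (dvd_mul_left _ _)
      constructor
      · intro k hk hmem
        obtain ⟨w, hw, hTw⟩ := (gs_mem q hq m hm _).mp hmem
        set n := GST q m v + j * q ^ v + 1 + k with hn
        have hnlt : n < GST q m (v - 1) := by
          have := hblock v hvt hvm j hjA
          have h3 := GST_interval hq (show 1 ≤ v by omega) (show v ≤ m by omega)
          have h2 : (j + 1) * q ^ v ≤ GSA q m v * q ^ v := Nat.mul_le_mul_right _ (by omega)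
          rw [add_mul, one_mul] at h2
          omega
        have hwv : v ≤ w := by
          by_contra hwv
          push_neg at hwv
          have : GST q m (v - 1) ≤ GST q m w := GST_antitone hq (by omega)
          omega
        have hdvdn : q ^ v ∣ n := dvd_trans (pow_dvd_pow q hwv) hw
        have hdvdk : q ^ v ∣ k + 1 := by
          have := Nat.dvd_sub hdvdn hdvdb
          have he : n - (GST q m v + j * q ^ v) = k + 1 := by omega
          rwa [he] at this
        have := Nat.le_of_dvd (by omega) hdvdk
        omega
      · right
        simp only [Nat.add_sub_cancel]
        exact (gs_mem q hq m hm _).mpr ⟨v, hdvdb, Nat.le_add_right _ _⟩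
  unfold nGapIntervals
  rw [hSeq, Nat.card_coe_set_eq, Set.ncard_coe_finset,
    Finset.card_image_of_injective _ (add_left_injective 1), hF,
    Finset.card_biUnion]
  · have hcards : ∀ v ∈ Finset.Ico t m,
        ((Finset.range (GSA q m v)).image fun j => GST q m v + j * q ^ v).card = GSA q m v := by
      intro v hv
      rw [Finset.card_image_of_injective, Finset.card_range]
      intro a b hab
      simp only at hab
      have h1 : 0 < q ^ v := Nat.pow_pos (by omega)
      exact Nat.eq_of_mul_eq_mul_right h1 (by omega)
    rw [Finset.sum_congr rfl hcards, GSA_sum hq (m - t) t (by omega)]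
    congr 2
    omega
  · -- disjointness
    intro v hv w hw hvw
    simp only [Finset.mem_coe, Finset.mem_Ico] at hv hw
    rw [Function.onFun, Finset.disjoint_left]
    rintro x hx hx'
    simp only [Finset.mem_image, Finset.mem_range] at hx hx'
    obtain ⟨j, hj, rfl⟩ := hx
    obtain ⟨j', hj', he⟩ := hx'
    rcases Nat.lt_or_ge v w with h | h
    · have h1 := hblock w hw.1 hw.2 j' hj'
      have h2 : GST q m (w - 1) ≤ GST q m v := GST_antitone hq (by omega)
      omega
    · have h : w < v := by omega
      have h1 := hblock v hv.1 hv.2 j hj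
      have h2 : GST q m (v - 1) ≤ GST q m w := GST_antitone hq (by omega)
      omega
end

section
/- Let Λ be a numerical semigroup with genus g, conductor c, and elements λ₀=0<λ₁<⋯, and let ν_i = #{λⱼ ≤ λᵢ : λᵢ − λⱼ ∈ Λ}. If λᵢ ≥ c then ν_i = λᵢ − 2g + 1 + G(i), where G(i) is the number of pairs of gaps summing to λᵢ; in particular ν_i ≥ λᵢ − 2g + 1. -/
theorem nu_formula_beyond_conductor
    (Λ : Set ℕ) (h0 : 0 ∈ Λ) (hadd : ∀ a ∈ Λ, ∀ b ∈ Λ, a + b ∈ Λ)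
    (hfin : {n : ℕ | n ∉ Λ}.Finite)
    (g : ℕ) (hg : g = Nat.card {n : ℕ | n ∉ Λ})
    (c : ℕ) (hc : IsLeast {n : ℕ | ∀ m : ℕ, n ≤ m → m ∈ Λ} c)
    (lam : ℕ → ℕ) (hmono : StrictMono lam) (hrange : Set.range lam = Λ)
    (i : ℕ) (hi : c ≤ lam i)
    (nu Gi : ℕ)
    (hnu : nu = Nat.card {x : ℕ | x ∈ Λ ∧ x ≤ lam i ∧ lam i - x ∈ Λ})
    (hGi : Gi = Nat.card {p : ℕ × ℕ | p.1 ∉ Λ ∧ p.2 ∉ Λ ∧ p.1 + p.2 = lam i}) :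
    (nu : ℤ) = (lam i : ℤ) - 2 * g + 1 + Gi ∧ (lam i : ℤ) - 2 * g + 1 ≤ (nu : ℤ) := by
  classical
  set N := lam i with hN
  have hgap_lt : ∀ n, n ∉ Λ → n < c := by
    intro n hn
    by_contra h
    exact hn (hc.1 n (le_of_not_gt h))
  set S := Finset.range (N + 1) with hS
  set FA := S.filter (fun x => x ∉ Λ) with hFA
  set FB := S.filter (fun x => N - x ∉ Λ) with hFB
  set FAB := S.filter (fun x => x ∉ Λ ∧ N - x ∉ Λ) with hFAB
  set Fnu := S.filter (fun x => x ∈ Λ ∧ N - x ∈ Λ) with hFnu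
  -- g = FA.card
  have hgcard : g = FA.card := by
    rw [hg]
    have hset : {n : ℕ | n ∉ Λ} = (↑FA : Set ℕ) := by
      ext n
      simp only [hFA, hS, Finset.coe_filter, Finset.mem_range, Set.mem_setOf_eq]
      constructor
      · intro hn; exact ⟨by have := hgap_lt n hn; omega, hn⟩
      · intro hn; exact hn.2
    rw [hset, Nat.card_coe_set_eq, Set.ncard_coe_finset]
  -- FB.card = FA.card
  have hBA : FB.card = FA.card := by
    apply Finset.card_bij (fun x _ => N - x)
    · intro a ha
      simp only [hFB, hS, Finset.mem_filter, Finset.mem_range] at ha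
      simp only [hFA, hS, Finset.mem_filter, Finset.mem_range]
      exact ⟨by omega, ha.2⟩
    · intro a ha b hb hab
      simp only [hFB, hS, Finset.mem_filter, Finset.mem_range] at ha hb
      omega
    · intro b hb
      simp only [hFA, hS, Finset.mem_filter, Finset.mem_range] at hb
      refine ⟨N - b, ?_, by omega⟩
      simp only [hFB, hS, Finset.mem_filter, Finset.mem_range]
      have : N - (N - b) = b := by omega
      rw [this]
      exact ⟨by omega, hb.2⟩
  -- nu = Fnu.card
  have hnucard : nu = Fnu.card := by
    rw [hnu]
    have hset : {x : ℕ | x ∈ Λ ∧ x ≤ lam i ∧ lam i - x ∈ Λ} = (↑Fnu : Set ℕ) := by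
      ext x
      simp only [hFnu, hS, Finset.coe_filter, Finset.mem_range, Set.mem_setOf_eq, ← hN]
      constructor
      · rintro ⟨h1, h2, h3⟩; exact ⟨by omega, h1, h3⟩
      · rintro ⟨h1, h2, h3⟩; exact ⟨h2, by omega, h3⟩
    rw [hset, Nat.card_coe_set_eq, Set.ncard_coe_finset]
  -- Gi = FAB.card
  have hGicard : Gi = FAB.card := by
    rw [hGi]
    have hset : {p : ℕ × ℕ | p.1 ∉ Λ ∧ p.2 ∉ Λ ∧ p.1 + p.2 = lam i}
        = (↑(FAB.image (fun x => (x, N - x))) : Set (ℕ × ℕ)) := by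
      ext ⟨a, b⟩
      simp only [Finset.coe_image, Set.mem_image, Finset.mem_coe, hFAB, hS,
        Finset.mem_filter, Finset.mem_range, Set.mem_setOf_eq, ← hN]
      constructor
      · rintro ⟨h1, h2, h3⟩
        refine ⟨a, ⟨by omega, h1, ?_⟩, ?_⟩
        · have : N - a = b := by omega
          rw [this]; exact h2
        · have : N - a = b := by omega
          rw [this]
      · rintro ⟨x, ⟨hx1, hx2, hx3⟩, hx4⟩
        obtain ⟨ha, hb⟩ := Prod.mk.inj hx4
        subst ha; subst hb
        exact ⟨hx2, hx3, by omega⟩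
    rw [hset, Nat.card_coe_set_eq, Set.ncard_coe_finset]
    rw [Finset.card_image_of_injOn]
    intro x _ y _ hxy
    exact (Prod.mk.injEq _ _ _ _ ▸ hxy).1
  -- inclusion-exclusion
  have h1 : Fnu.card + (S.filter (fun x => ¬(x ∈ Λ ∧ N - x ∈ Λ))).card = S.card :=
    Finset.card_filter_add_card_filter_not _
  have h2 : S.filter (fun x => ¬(x ∈ Λ ∧ N - x ∈ Λ)) = FA ∪ FB := by
    rw [hFA, hFB, ← Finset.filter_or]
    apply Finset.filter_congr
    intro x _
    tauto
  have h3 : (FA ∪ FB).card + (FA ∩ FB).card = FA.card + FB.card :=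
    Finset.card_union_add_card_inter _ _
  have h4 : FA ∩ FB = FAB := by
    rw [hFA, hFB, hFAB, ← Finset.filter_and]
  have hScard : S.card = N + 1 := by rw [hS, Finset.card_range]
  rw [h2] at h1
  rw [h4] at h3
  have key : nu + 2 * g = N + 1 + Gi := by
    rw [hnucard, hgcard, hGicard]
    omega
  constructor
  · have := key
    push_cast [← hN]
    omega
  · have := key
    push_cast [← hN]
    omega
end
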